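/- Let n ≥ 2 and let W_1,…,W_n be bounded operators on a complex Hilbert space L satisfying the Cuntz relations W_i^* W_j = δ_{ij} I and W_1 W_1^* + ⋯ + W_n W_n^* = I. Let L⁰ be the closed linear span of {W^α x : x ∈ L^c(W), α a word}. Then L⁰ is a reducing subspace for each W_i (i.e. W_i L⁰ ⊆ L⁰ and W_i^* L⁰ ⊆ L⁰ for all i), and the only vector x in the orthogonal complement (L⁰)^⊥ satisfying (W_i^* W_j^* − W_j^* W_i^*)(W^α)^* x = 0 for all i, j and all words α is x = 0 (i.e. the restriction of the tuple to (L⁰)^⊥ has trivial maximal commuting piece). -/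

import Mathlib

open ContinuousLinearMap

noncomputable def wordProd {n : ℕ} {L : Type*} [NormedAddCommGroup L] [InnerProductSpace ℂ L]
    (R : Fin n → L →L[ℂ] L) (α : List (Fin n)) : L →L[ℂ] L :=
  (α.map R).prod

/-- The maximal commuting piece space of a tuple. -/
noncomputable def commPieceSet {n : ℕ} {L : Type*} [NormedAddCommGroup L]
    [InnerProductSpace ℂ L] [CompleteSpace L] (R : Fin n → L →L[ℂ] L) : Set L :=
  {x : L | ∀ (i j : Fin n) (α : List (Fin n)),
    adjoint (R i) (adjoint (R j) (adjoint (wordProd R α) x)) =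
    adjoint (R j) (adjoint (R i) (adjoint (wordProd R α) x))}

lemma wordProd_cons {n : ℕ} {L : Type*} [NormedAddCommGroup L] [InnerProductSpace ℂ L]
    (R : Fin n → L →L[ℂ] L) (k : Fin n) (α : List (Fin n)) :
    wordProd R (k :: α) = R k ∘L wordProd R α := by
  simp [wordProd, List.prod_cons, ContinuousLinearMap.mul_def]

/-- for a Cuntz tuple `W` on `L`, the closed span `L⁰` of
`{W^α x : x ∈ L^c(W)}` reduces each `W_i`, and the restriction of the tuple to
`(L⁰)^⊥` has trivial maximal commuting piece. -/
theorem stmt11 {n : ℕ} (hn : 2 ≤ n) {L : Type*} [NormedAddCommGroup L]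
    [InnerProductSpace ℂ L] [CompleteSpace L]
    (W : Fin n → L →L[ℂ] L)
    (hisom : ∀ i j : Fin n, adjoint (W i) ∘L W j = if i = j then 1 else 0)
    (hcuntz : ∑ i : Fin n, W i ∘L adjoint (W i) = 1) :
    ∀ L0 : Submodule ℂ L,
      L0 = (Submodule.span ℂ {x : L | ∃ (α : List (Fin n)) (y : L),
        y ∈ commPieceSet W ∧ x = wordProd W α y}).topologicalClosure →
      ((∀ i : Fin n, ∀ x ∈ L0, W i x ∈ L0 ∧ adjoint (W i) x ∈ L0) ∧
        ∀ x ∈ L0ᗮ, x ∈ commPieceSet W → x = 0) := by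
  intro L0 hL0
  set S : Set L := {x : L | ∃ (α : List (Fin n)) (y : L),
      y ∈ commPieceSet W ∧ x = wordProd W α y} with hS
  have hclosed : IsClosed (L0 : Set L) := by
    rw [hL0]; exact Submodule.isClosed_topologicalClosure _
  have hSL0 : S ⊆ (L0 : Set L) := by
    intro x hx
    rw [hL0]
    exact Submodule.le_topologicalClosure _ (Submodule.subset_span hx)
  -- commPieceSet is closed under adjoints
  have hcomm_adj : ∀ k : Fin n, ∀ y ∈ commPieceSet W, adjoint (W k) y ∈ commPieceSet W := by
    intro k y hy i j α
    have h := hy i j (k :: α)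
    have e : adjoint (wordProd W (k :: α)) = adjoint (wordProd W α) ∘L adjoint (W k) := by
      rw [wordProd_cons, ContinuousLinearMap.adjoint_comp]
    rw [e] at h
    simpa using h
  -- mapping closures into L0
  have key : ∀ T : L →L[ℂ] L, (∀ x ∈ S, T x ∈ L0) → ∀ x ∈ L0, T x ∈ L0 := by
    intro T hT x hx
    have h1 : Submodule.span ℂ S ≤ L0.comap (T : L →ₗ[ℂ] L) := by
      rw [Submodule.span_le]; intro z hz; exact hT z hz
    have hcl : IsClosed ((L0.comap (T : L →ₗ[ℂ] L) : Submodule ℂ L) : Set L) := by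
      have e : ((L0.comap (T : L →ₗ[ℂ] L) : Submodule ℂ L) : Set L) = T ⁻¹' (L0 : Set L) := rfl
      rw [e]; exact hclosed.preimage T.continuous
    have h2 : (Submodule.span ℂ S).topologicalClosure ≤ L0.comap (T : L →ₗ[ℂ] L) :=
      Submodule.topologicalClosure_minimal _ h1 hcl
    rw [hL0] at hx
    exact h2 hx
  constructor
  · intro i x hx
    constructor
    · refine key (W i) ?_ x hx
      rintro z ⟨α, y, hy, rfl⟩
      refine hSL0 ⟨i :: α, y, hy, ?_⟩
      rw [wordProd_cons]; rfl
    · refine key (adjoint (W i)) ?_ x hx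
      rintro z ⟨α, y, hy, rfl⟩
      cases α with
      | nil =>
          have : wordProd W ([] : List (Fin n)) y = y := by simp [wordProd]
          rw [this]
          exact hSL0 ⟨[], adjoint (W i) y, hcomm_adj i y hy, by simp [wordProd]⟩
      | cons k α' =>
          rw [wordProd_cons]
          have : adjoint (W i) ((W k ∘L wordProd W α') y)
              = ((adjoint (W i) ∘L W k) ∘L wordProd W α') y := rfl
          rw [this, hisom i k]
          by_cases hik : i = k
          · simp only [if_pos hik]
            exact hSL0 ⟨α', y, hy, rfl⟩
          · simp only [if_neg hik]
            simp only [ContinuousLinearMap.zero_comp, ContinuousLinearMap.zero_apply]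
            exact L0.zero_mem
  · intro x hxo hxc
    have hxL0 : x ∈ L0 := hSL0 ⟨[], x, hxc, by simp [wordProd]⟩
    have := (Submodule.mem_orthogonal L0 x).mp hxo x hxL0
    simpa [inner_self_eq_zero] using this
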